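/- Let Ω ⊂ ℝ^m be a nonempty open set with 0 < |Ω| < ∞. Then the heat content t ↦ H_Ω(t) is convex on (0,∞): for all t, s > 0 and λ ∈ [0,1], H_Ω(λt + (1−λ)s) ≤ λH_Ω(t) + (1−λ)H_Ω(s). -/

import Mathlib

set_option maxHeartbeats 1000000

open Real MeasureTheory Complex FourierTransform
open scoped RealInnerProductSpace

noncomputable section

def phase (m : ℕ) (ξ x : EuclideanSpace ℝ (Fin m)) : ℂ :=
  Complex.exp ((-2 * π * ⟪ξ, x⟫ : ℝ) * Complex.I)

lemma phase_cont (m : ℕ) :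
    Continuous fun p : (EuclideanSpace ℝ (Fin m)) × (EuclideanSpace ℝ (Fin m)) =>
      phase m p.1 p.2 := by
  unfold phase
  exact Complex.continuous_exp.comp
    ((Complex.continuous_ofReal.comp ((continuous_const.mul continuous_inner))).mul
      continuous_const)

lemma phase_norm (m : ℕ) (ξ x : EuclideanSpace ℝ (Fin m)) : ‖phase m ξ x‖ = 1 := by
  unfold phase
  exact Complex.norm_exp_ofReal_mul_I _

def cF (m : ℕ) (Ω : Set (EuclideanSpace ℝ (Fin m))) (ξ : EuclideanSpace ℝ (Fin m)) : ℂ :=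
  ∫ x in Ω, phase m ξ x

lemma cF_cont (m : ℕ) (Ω : Set (EuclideanSpace ℝ (Fin m))) (hvol : volume Ω < ⊤) :
    Continuous (cF m Ω) := by
  haveI : IsFiniteMeasure (volume.restrict Ω) := ⟨by rwa [Measure.restrict_apply_univ]⟩
  apply MeasureTheory.continuous_of_dominated (bound := fun _ => (1:ℝ))
  · intro ξ
    refine Continuous.aestronglyMeasurable ?_
    unfold phase
    exact Complex.continuous_exp.comp
      ((Complex.continuous_ofReal.comp
        ((continuous_const.mul (Continuous.inner continuous_const continuous_id)))).mul
        continuous_const)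
  · intro ξ
    filter_upwards with x using le_of_eq (phase_norm m ξ x)
  · exact integrable_const 1
  · filter_upwards with x
    unfold phase
    exact Complex.continuous_exp.comp
      ((Complex.continuous_ofReal.comp
        ((continuous_const.mul (Continuous.inner continuous_id continuous_const)))).mul
        continuous_const)

lemma cF_bound (m : ℕ) (Ω : Set (EuclideanSpace ℝ (Fin m))) (hΩ : MeasurableSet Ω)
    (hvol : volume Ω < ⊤) (ξ : EuclideanSpace ℝ (Fin m)) :
    ‖cF m Ω ξ‖ ≤ (volume Ω).toReal := by
  unfold cF
  calc ‖∫ x in Ω, phase m ξ x‖ ≤ 1 * (volume Ω).toReal :=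
        norm_setIntegral_le_of_norm_le_const hvol
          (fun x _ => le_of_eq (phase_norm m ξ x))
      _ = (volume Ω).toReal := one_mul _

lemma kernel_rep (m : ℕ) {t : ℝ} (ht : 0 < t) (z : EuclideanSpace ℝ (Fin m)) :
    (((4 * π * t) ^ (-(m : ℝ) / 2) * rexp (-‖z‖ ^ 2 / (4 * t)) : ℝ) : ℂ)
      = ∫ ξ : EuclideanSpace ℝ (Fin m),
          Complex.exp ((-2 * π * ⟪ξ, z⟫ : ℝ) * Complex.I)
            * Complex.exp (-(4 * π ^ 2 * t : ℂ) * ‖ξ‖ ^ 2) := by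
  have hb : (0:ℝ) < 4 * π ^ 2 * t := by positivity
  have hb' : 0 < ((4 * π ^ 2 * t : ℝ) : ℂ).re := by rw [Complex.ofReal_re]; exact hb
  have hπ : π ≠ 0 := pi_ne_zero
  have ht' : t ≠ 0 := ht.ne'
  have hπc : (π : ℂ) ≠ 0 := Complex.ofReal_ne_zero.mpr hπ
  have htc : (t : ℂ) ≠ 0 := Complex.ofReal_ne_zero.mpr ht'
  have h := fourier_gaussian_innerProductSpace
      (V := EuclideanSpace ℝ (Fin m)) (b := ((4 * π ^ 2 * t : ℝ) : ℂ)) hb' z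
  rw [Real.fourier_eq'] at h
  simp only [smul_eq_mul] at h
  have e1 : (∫ ξ : EuclideanSpace ℝ (Fin m),
      Complex.exp ((-2 * π * ⟪ξ, z⟫ : ℝ) * Complex.I)
        * Complex.exp (-(4 * π ^ 2 * t : ℂ) * ‖ξ‖ ^ 2))
      = (↑π / ((4 * π ^ 2 * t : ℝ) : ℂ)) ^ ((Module.finrank ℝ (EuclideanSpace ℝ (Fin m)) : ℂ) / 2)
          * Complex.exp (-(π:ℂ) ^ 2 * (‖z‖:ℂ) ^ 2 / ((4 * π ^ 2 * t : ℝ) : ℂ)) := by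
    rw [← h]
    norm_cast
  rw [e1]
  have hm : (Module.finrank ℝ (EuclideanSpace ℝ (Fin m)) : ℂ) = (m : ℂ) := by
    simp [finrank_euclideanSpace]
  rw [hm]
  have hbase : (↑π / ((4 * π ^ 2 * t : ℝ) : ℂ)) = (((4 * π * t)⁻¹ : ℝ) : ℂ) := by
    push_cast
    field_simp
  rw [hbase]
  have hpow : ((((4 * π * t)⁻¹ : ℝ)) : ℂ) ^ ((m : ℂ) / 2)
      = ((((4 * π * t)⁻¹ : ℝ) ^ ((m : ℝ) / 2) : ℝ) : ℂ) := by
    rw [Complex.ofReal_cpow (by positivity)]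
    congr 1
    push_cast
    ring
  rw [hpow]
  have hexp : (-(π:ℂ) ^ 2 * (‖z‖:ℂ) ^ 2 / ((4 * π ^ 2 * t : ℝ) : ℂ))
      = ((-‖z‖ ^ 2 / (4 * t) : ℝ) : ℂ) := by
    push_cast
    field_simp
  rw [hexp, ← Complex.ofReal_exp, ← Complex.ofReal_mul, Complex.ofReal_inj]
  congr 1
  rw [Real.inv_rpow (by positivity : (0:ℝ) ≤ 4 * π * t),
    ← Real.rpow_neg (by positivity : (0:ℝ) ≤ 4 * π * t), neg_div]

lemma phase_sub (m : ℕ) (ξ x y : EuclideanSpace ℝ (Fin m)) :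
    phase m ξ (x - y) = phase m ξ x * (starRingEnd ℂ) (phase m ξ y) := by
  unfold phase
  rw [← Complex.exp_conj, ← Complex.exp_add]
  congr 1
  simp only [map_mul, Complex.conj_ofReal, Complex.conj_I, inner_sub_right]
  push_cast
  ring

lemma gauss_integrable (m : ℕ) {t : ℝ} (ht : 0 < t) :
    Integrable (fun ξ : EuclideanSpace ℝ (Fin m) =>
      Complex.exp (-(4 * π ^ 2 * t : ℂ) * ‖ξ‖ ^ 2)) := by
  have hb : 0 < ((4 * π ^ 2 * t : ℝ) : ℂ).re := by
    rw [Complex.ofReal_re]; positivity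
  have h := GaussianFourier.integrable_cexp_neg_mul_sq_norm_add
      (V := EuclideanSpace ℝ (Fin m)) (b := ((4 * π ^ 2 * t : ℝ) : ℂ)) hb 0 0
  simpa using h

lemma heat_rep (m : ℕ) (Ω : Set (EuclideanSpace ℝ (Fin m))) (hΩ : MeasurableSet Ω)
    (hvol : volume Ω < ⊤) {t : ℝ} (ht : 0 < t) :
    (∫ x in Ω, ∫ y in Ω,
        (4 * Real.pi * t) ^ (-(m : ℝ) / 2) * Real.exp (-(dist x y) ^ 2 / (4 * t)))
      = ∫ ξ : EuclideanSpace ℝ (Fin m),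
          Complex.normSq (cF m Ω ξ) * rexp (-(4 * π ^ 2 * ‖ξ‖ ^ 2) * t) := by
  haveI : IsFiniteMeasure (volume.restrict Ω) := ⟨by rwa [Measure.restrict_apply_univ]⟩
  set μ : Measure (EuclideanSpace ℝ (Fin m)) := volume.restrict Ω with hμ
  set g : EuclideanSpace ℝ (Fin m) → ℂ :=
    fun ξ => Complex.exp (-(4 * π ^ 2 * t : ℂ) * ‖ξ‖ ^ 2) with hgdef
  have hg : Integrable g := gauss_integrable m ht
  rw [← Complex.ofReal_inj]
  -- pointwise kernel representation
  have L2 : ∀ x y : EuclideanSpace ℝ (Fin m),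
      (((4 * Real.pi * t) ^ (-(m : ℝ) / 2) * Real.exp (-(dist x y) ^ 2 / (4 * t)) : ℝ) : ℂ)
        = ∫ ξ, phase m ξ x * (starRingEnd ℂ) (phase m ξ y) * g ξ := by
    intro x y
    rw [dist_eq_norm, kernel_rep m ht (x - y)]
    refine integral_congr_ae (Filter.Eventually.of_forall fun ξ => ?_)
    show Complex.exp ((-2 * π * ⟪ξ, x - y⟫ : ℝ) * Complex.I)
        * Complex.exp (-(4 * π ^ 2 * t : ℂ) * ‖ξ‖ ^ 2)
      = phase m ξ x * (starRingEnd ℂ) (phase m ξ y) * g ξ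
    rw [← phase_sub]
    rfl
  -- the integrand on the triple product
  set Q : ((EuclideanSpace ℝ (Fin m) × EuclideanSpace ℝ (Fin m)) × EuclideanSpace ℝ (Fin m)) → ℂ :=
    fun q => phase m q.2 q.1.1 * (starRingEnd ℂ) (phase m q.2 q.1.2) * g q.2 with hQdef
  have hQcont : Continuous Q := by
    rw [hQdef]
    exact (((phase_cont m).comp (continuous_snd.prodMk continuous_fst.fst)).mul
      (continuous_star.comp ((phase_cont m).comp (continuous_snd.prodMk continuous_fst.snd)))).mul
      (Complex.continuous_exp.comp (by fun_prop))
  have hQnorm : ∀ q, ‖Q q‖ = ‖g q.2‖ := by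
    intro q
    rw [hQdef]
    simp only [norm_mul, RCLike.norm_conj, phase_norm]
    ring
  have hQint : Integrable Q ((μ.prod μ).prod volume) := by
    refine Integrable.mono' (g := fun q => (1:ℝ) * ‖g q.2‖) ?_ hQcont.aestronglyMeasurable ?_
    · exact (integrable_const (1:ℝ)).mul_prod hg.norm
    · filter_upwards with q
      rw [hQnorm q, one_mul]
  -- combine the x,y integrals into one over the product measure
  have hIcont : Continuous fun p : EuclideanSpace ℝ (Fin m) × EuclideanSpace ℝ (Fin m) =>
      ∫ ξ, Q (p, ξ) := by
    apply MeasureTheory.continuous_of_dominated (bound := fun ξ => ‖g ξ‖)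
    · intro p
      exact (hQcont.comp (continuous_const.prodMk continuous_id)).aestronglyMeasurable
    · intro p
      filter_upwards with ξ using le_of_eq (hQnorm (p, ξ))
    · exact hg.norm
    · filter_upwards with ξ
      exact hQcont.comp (continuous_id.prodMk continuous_const)
  have hIint : Integrable (Function.uncurry fun x y => ∫ ξ, Q ((x, y), ξ)) (μ.prod μ) := by
    refine Integrable.mono' (g := fun _ => ∫ ξ, ‖g ξ‖) (integrable_const _)
      ?_ ?_
    · exact (hIcont.comp continuous_id).aestronglyMeasurable
    · filter_upwards with p
      exact norm_integral_le_of_norm_le hg.norm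
        (Filter.Eventually.of_forall fun ξ => le_of_eq (hQnorm (p, ξ)))
  calc (((∫ x in Ω, ∫ y in Ω,
        (4 * Real.pi * t) ^ (-(m : ℝ) / 2) * Real.exp (-(dist x y) ^ 2 / (4 * t))) : ℝ) : ℂ)
      = ∫ x in Ω, ∫ y in Ω, (((4 * Real.pi * t) ^ (-(m : ℝ) / 2)
          * Real.exp (-(dist x y) ^ 2 / (4 * t)) : ℝ) : ℂ) := by
        refine Eq.trans (integral_ofReal).symm
          (integral_congr_ae (Filter.Eventually.of_forall fun x => (integral_ofReal).symm))
    _ = ∫ x in Ω, ∫ y in Ω, ∫ ξ,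
          phase m ξ x * (starRingEnd ℂ) (phase m ξ y) * g ξ := by
        simp_rw [L2]
    _ = ∫ p, (∫ ξ, Q (p, ξ)) ∂(μ.prod μ) := integral_integral hIint
    _ = ∫ ξ, ∫ p, Q (p, ξ) ∂(μ.prod μ) := integral_integral_swap hQint
    _ = ∫ ξ, ((Complex.normSq (cF m Ω ξ) : ℝ) : ℂ) * g ξ := by
        refine integral_congr_ae (Filter.Eventually.of_forall fun ξ => ?_)
        calc (∫ p, Q (p, ξ) ∂(μ.prod μ))
            = (∫ p, (phase m ξ p.1 * (starRingEnd ℂ) (phase m ξ p.2)) ∂(μ.prod μ)) * g ξ := by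
              rw [← integral_mul_const]
          _ = ((∫ x, phase m ξ x ∂μ) * ∫ y, (starRingEnd ℂ) (phase m ξ y) ∂μ) * g ξ := by
              exact congrArg (fun z => z * g ξ)
                (integral_prod_mul (fun x => phase m ξ x)
                  (fun y => (starRingEnd ℂ) (phase m ξ y)))
          _ = (cF m Ω ξ * (starRingEnd ℂ) (cF m Ω ξ)) * g ξ := by
              rw [integral_conj]
              rfl
          _ = ((Complex.normSq (cF m Ω ξ) : ℝ) : ℂ) * g ξ := by rw [Complex.mul_conj]
    _ = ∫ ξ, (((Complex.normSq (cF m Ω ξ) * rexp (-(4 * π ^ 2 * ‖ξ‖ ^ 2) * t)) : ℝ) : ℂ) := by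
        refine integral_congr_ae (Filter.Eventually.of_forall fun ξ => ?_)
        show ((Complex.normSq (cF m Ω ξ) : ℝ) : ℂ) * Complex.exp (-(4 * π ^ 2 * t : ℂ) * ‖ξ‖ ^ 2)
          = (((Complex.normSq (cF m Ω ξ) * rexp (-(4 * π ^ 2 * ‖ξ‖ ^ 2) * t)) : ℝ) : ℂ)
        rw [Complex.ofReal_mul, Complex.ofReal_exp]
        congr 1
        push_cast
        ring
    _ = (((∫ ξ, Complex.normSq (cF m Ω ξ) * rexp (-(4 * π ^ 2 * ‖ξ‖ ^ 2) * t)) : ℝ) : ℂ) := by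
        exact integral_ofReal

lemma rgauss_integrable (m : ℕ) {t : ℝ} (ht : 0 < t) :
    Integrable (fun ξ : EuclideanSpace ℝ (Fin m) => rexp (-(4 * π ^ 2 * ‖ξ‖ ^ 2) * t)) := by
  have h := (gauss_integrable m ht).norm
  refine h.congr (Filter.Eventually.of_forall fun ξ => ?_)
  show ‖Complex.exp (-(4 * π ^ 2 * t : ℂ) * (‖ξ‖:ℂ) ^ 2)‖ = rexp (-(4 * π ^ 2 * ‖ξ‖ ^ 2) * t)
  rw [Complex.norm_exp]
  congr 1
  have : (-(4 * (π:ℂ) ^ 2 * t) * (‖ξ‖:ℂ) ^ 2) = ((-(4 * π ^ 2 * ‖ξ‖ ^ 2) * t : ℝ) : ℂ) := by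
    push_cast; ring
  rw [this, Complex.ofReal_re]

lemma F_integrable (m : ℕ) (Ω : Set (EuclideanSpace ℝ (Fin m))) (hΩ : MeasurableSet Ω)
    (hvol : volume Ω < ⊤) {t : ℝ} (ht : 0 < t) :
    Integrable (fun ξ : EuclideanSpace ℝ (Fin m) =>
      Complex.normSq (cF m Ω ξ) * rexp (-(4 * π ^ 2 * ‖ξ‖ ^ 2) * t)) := by
  refine Integrable.mono' (((rgauss_integrable m ht).const_mul ((volume Ω).toReal ^ 2)))
    ?_ ?_
  · exact ((Complex.continuous_normSq.comp (cF_cont m Ω hvol)).mul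
      (Real.continuous_exp.comp (by fun_prop))).aestronglyMeasurable
  · filter_upwards with ξ
    rw [Real.norm_eq_abs, _root_.abs_of_nonneg (mul_nonneg (Complex.normSq_nonneg _) (Real.exp_nonneg _))]
    apply mul_le_mul_of_nonneg_right _ (Real.exp_nonneg _)
    calc Complex.normSq (cF m Ω ξ) = ‖cF m Ω ξ‖ ^ 2 := by
          rw [Complex.normSq_eq_norm_sq]
      _ ≤ (volume Ω).toReal ^ 2 := by
          apply pow_le_pow_left₀ (norm_nonneg _) (cF_bound m Ω hΩ hvol ξ)

theorem heat_content_convex (m : ℕ) (hm : 1 ≤ m)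
    (Ω : Set (EuclideanSpace ℝ (Fin m))) (hΩ : IsOpen Ω) (hne : Ω.Nonempty)
    (hpos : 0 < volume Ω) (hvol : volume Ω < ⊤) :
    ConvexOn ℝ (Set.Ioi 0) (fun t : ℝ => ∫ x in Ω, ∫ y in Ω,
        (4 * Real.pi * t) ^ (-(m : ℝ) / 2) * Real.exp (-(dist x y) ^ 2 / (4 * t))) := by
  have hΩm : MeasurableSet Ω := hΩ.measurableSet
  refine ⟨convex_Ioi 0, ?_⟩
  intro t ht s hs a b ha hb hab
  have hts : (0:ℝ) < a * t + b * s := by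
    have := (convex_Ioi (0:ℝ)) ht hs ha hb hab
    simpa using this
  simp only [smul_eq_mul]
  rw [heat_rep m Ω hΩm hvol hts, heat_rep m Ω hΩm hvol (Set.mem_Ioi.mp ht),
    heat_rep m Ω hΩm hvol (Set.mem_Ioi.mp hs)]
  calc (∫ ξ : EuclideanSpace ℝ (Fin m),
        Complex.normSq (cF m Ω ξ) * rexp (-(4 * π ^ 2 * ‖ξ‖ ^ 2) * (a * t + b * s)))
      ≤ ∫ ξ : EuclideanSpace ℝ (Fin m),
          (a * (Complex.normSq (cF m Ω ξ) * rexp (-(4 * π ^ 2 * ‖ξ‖ ^ 2) * t))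
            + b * (Complex.normSq (cF m Ω ξ) * rexp (-(4 * π ^ 2 * ‖ξ‖ ^ 2) * s))) := by
        refine integral_mono (F_integrable m Ω hΩm hvol hts) ?_ ?_
        · exact ((F_integrable m Ω hΩm hvol (Set.mem_Ioi.mp ht)).const_mul a).add
            ((F_integrable m Ω hΩm hvol (Set.mem_Ioi.mp hs)).const_mul b)
        · intro ξ
          have key := convexOn_exp.2 (Set.mem_univ (-(4 * π ^ 2 * ‖ξ‖ ^ 2) * t))
            (Set.mem_univ (-(4 * π ^ 2 * ‖ξ‖ ^ 2) * s)) ha hb hab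
          simp only [smul_eq_mul] at key
          have harg : a * (-(4 * π ^ 2 * ‖ξ‖ ^ 2) * t) + b * (-(4 * π ^ 2 * ‖ξ‖ ^ 2) * s)
              = -(4 * π ^ 2 * ‖ξ‖ ^ 2) * (a * t + b * s) := by ring
          rw [harg] at key
          have h2 := mul_le_mul_of_nonneg_left key (Complex.normSq_nonneg (cF m Ω ξ))
          calc Complex.normSq (cF m Ω ξ) * rexp (-(4 * π ^ 2 * ‖ξ‖ ^ 2) * (a * t + b * s))
              ≤ Complex.normSq (cF m Ω ξ) * (a * rexp (-(4 * π ^ 2 * ‖ξ‖ ^ 2) * t)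
                  + b * rexp (-(4 * π ^ 2 * ‖ξ‖ ^ 2) * s)) := h2
            _ = a * (Complex.normSq (cF m Ω ξ) * rexp (-(4 * π ^ 2 * ‖ξ‖ ^ 2) * t))
                + b * (Complex.normSq (cF m Ω ξ) * rexp (-(4 * π ^ 2 * ‖ξ‖ ^ 2) * s)) := by
                ring
    _ = a * (∫ ξ : EuclideanSpace ℝ (Fin m),
            Complex.normSq (cF m Ω ξ) * rexp (-(4 * π ^ 2 * ‖ξ‖ ^ 2) * t))
          + b * (∫ ξ : EuclideanSpace ℝ (Fin m),
            Complex.normSq (cF m Ω ξ) * rexp (-(4 * π ^ 2 * ‖ξ‖ ^ 2) * s)) := by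
        rw [integral_add (((F_integrable m Ω hΩm hvol (Set.mem_Ioi.mp ht)).const_mul a))
            (((F_integrable m Ω hΩm hvol (Set.mem_Ioi.mp hs)).const_mul b)),
          integral_const_mul, integral_const_mul]

end
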